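/- (General solution of the fiber equation at energy b) Let b > 0, m ∈ ℤ and ν ∈ ℝ. A twice differentiable function u : (1,∞) → ℝ satisfies −u''(r) − u'(r)/r + ((m−ν)/r − b·r/2)²·u(r) = b·u(r) for all r > 1 if and only if there exist constants c₁, c₂ ∈ ℝ such that u(r) = r^{m−ν}·e^{−b·r²/4}·( c₁ + c₂·∫₁^r ρ^{−1−2(m−ν)}·e^{b·ρ²/2} dρ ) for all r > 1. -/

import Mathlib

open MeasureTheory

noncomputable def Wfn (b μ r : ℝ) : ℝ := r ^ μ * Real.exp (-b * r ^ 2 / 4)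
noncomputable def ffn (b μ ρ : ℝ) : ℝ := ρ ^ (-1 - 2 * μ) * Real.exp (b * ρ ^ 2 / 2)
noncomputable def Vfn (b μ r : ℝ) : ℝ := ∫ ρ in (1:ℝ)..r, ffn b μ ρ

lemma Wfn_pos (b μ : ℝ) {r : ℝ} (hr : 0 < r) : 0 < Wfn b μ r :=
  mul_pos (Real.rpow_pos_of_pos hr μ) (Real.exp_pos _)

lemma ffn_pos (b μ : ℝ) {ρ : ℝ} (hρ : 0 < ρ) : 0 < ffn b μ ρ :=
  mul_pos (Real.rpow_pos_of_pos hρ _) (Real.exp_pos _)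

lemma hasDerivAt_Wfn (b μ : ℝ) {r : ℝ} (hr : 0 < r) :
    HasDerivAt (fun x => Wfn b μ x) ((μ / r - b * r / 2) * Wfn b μ r) r := by
  have h1 : HasDerivAt (fun x : ℝ => x ^ μ) (μ * r ^ (μ - 1)) r :=
    Real.hasDerivAt_rpow_const (Or.inl hr.ne')
  have h2 : HasDerivAt (fun x : ℝ => -b * x ^ 2 / 4) (-b * (2 * r) / 4) r := by
    have := (hasDerivAt_pow 2 r).const_mul (-b)
    simpa using this.div_const 4
  have h3 := h1.mul h2.exp
  refine h3.congr_deriv ?_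
  symm
  have : r ^ (μ - 1) = r ^ μ / r := by
    rw [Real.rpow_sub hr, Real.rpow_one]
  rw [this]
  unfold Wfn
  field_simp
  ring

lemma hasDerivAt_ffn (b μ : ℝ) {r : ℝ} (hr : 0 < r) :
    HasDerivAt (fun x => ffn b μ x) (((-1 - 2 * μ) / r + b * r) * ffn b μ r) r := by
  have h1 : HasDerivAt (fun x : ℝ => x ^ (-1 - 2 * μ)) ((-1 - 2 * μ) * r ^ (-1 - 2 * μ - 1)) r :=
    Real.hasDerivAt_rpow_const (Or.inl hr.ne')
  have h2 : HasDerivAt (fun x : ℝ => b * x ^ 2 / 2) (b * (2 * r) / 2) r := by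
    have := (hasDerivAt_pow 2 r).const_mul b
    simpa using this.div_const 2
  have h3 := h1.mul h2.exp
  refine h3.congr_deriv ?_
  symm
  have : r ^ (-1 - 2 * μ - 1) = r ^ (-1 - 2 * μ) / r := by
    rw [Real.rpow_sub hr, Real.rpow_one]
  rw [this]
  unfold ffn
  field_simp

lemma hasDerivAt_Vfn (b μ : ℝ) {r : ℝ} (hr : 1 < r) :
    HasDerivAt (fun x => Vfn b μ x) (ffn b μ r) r := by
  have hc : ContinuousOn (fun ρ => ffn b μ ρ) (Set.Ioi (0:ℝ)) := fun x hx =>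
    ((hasDerivAt_ffn b μ hx).continuousAt).continuousWithinAt
  have hr0 : (0:ℝ) < r := lt_trans one_pos hr
  apply intervalIntegral.integral_hasDerivAt_right
  · apply (hc.mono ?_).intervalIntegrable
    rw [Set.uIcc_of_le hr.le]
    intro x hx
    exact lt_of_lt_of_le one_pos hx.1
  · exact hc.stronglyMeasurableAtFilter isOpen_Ioi r hr0
  · exact (hasDerivAt_ffn b μ hr0).continuousAt

lemma ffn_Wfn (b μ : ℝ) {r : ℝ} (hr : 0 < r) :
    ffn b μ r * (r * Wfn b μ r ^ 2) = 1 := by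
  have hx : Real.exp (b * r ^ 2 / 2) * Real.exp (-b * r ^ 2 / 4) * Real.exp (-b * r ^ 2 / 4)
      = 1 := by
    rw [← Real.exp_add, ← Real.exp_add,
      show b * r ^ 2 / 2 + -b * r ^ 2 / 4 + -b * r ^ 2 / 4 = 0 by ring, Real.exp_zero]
  have hy : r ^ (-1 - 2 * μ) * r ^ μ * r ^ μ * r = 1 := by
    rw [← Real.rpow_add hr, ← Real.rpow_add hr,
      show -1 - 2 * μ + μ + μ = (-1 : ℝ) by ring, Real.rpow_neg_one]
    exact inv_mul_cancel₀ hr.ne'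
  calc ffn b μ r * (r * Wfn b μ r ^ 2)
      = (r ^ (-1 - 2 * μ) * r ^ μ * r ^ μ * r) *
        (Real.exp (b * r ^ 2 / 2) * Real.exp (-b * r ^ 2 / 4) * Real.exp (-b * r ^ 2 / 4)) := by
        unfold ffn Wfn; ring
    _ = 1 := by rw [hy, hx, mul_one]

lemma const_of_hasDerivAt_zero {g : ℝ → ℝ} (hg : ∀ r, 1 < r → HasDerivAt g 0 r)
    {x y : ℝ} (hx : 1 < x) (hy : 1 < y) : g x = g y := by
  have key : ∀ p q : ℝ, 1 < p → p ≤ q → g q = g p := by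
    intro p q hp hpq
    have := constant_of_has_deriv_right_zero (f := g) (a := p) (b := q)
      (fun z hz => ((hg z (lt_of_lt_of_le hp hz.1)).continuousAt).continuousWithinAt)
      (fun z hz => (hg z (lt_of_lt_of_le hp hz.1)).hasDerivWithinAt)
    exact this q ⟨hpq, le_refl q⟩
  rcases le_total x y with h | h
  · exact (key x y hx h).symm
  · exact key y x hy h

lemma hasDerivAt_afn (b μ : ℝ) {r : ℝ} (hr : r ≠ 0) :
    HasDerivAt (fun x : ℝ => μ / x - b * x / 2) (-μ / r ^ 2 - b / 2) r := by
  have h1 := (hasDerivAt_inv hr).const_mul μ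
  have h2 := ((hasDerivAt_id r).const_mul b).div_const 2
  have h3 : HasDerivAt (fun x : ℝ => μ * x⁻¹ - b * id x / 2) _ r := h1.sub h2
  have he : (fun x : ℝ => μ * x⁻¹ - b * id x / 2) = fun x : ℝ => μ / x - b * x / 2 := by
    funext x; simp [div_eq_mul_inv]
  rw [he] at h3
  refine h3.congr_deriv ?_
  symm
  field_simp

noncomputable def Dfn (b μ c₁ c₂ : ℝ) (x : ℝ) : ℝ :=
  (μ / x - b * x / 2) * Wfn b μ x * (c₁ + c₂ * Vfn b μ x) + Wfn b μ x * (c₂ * ffn b μ x)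

lemma hasDerivAt_G (b μ c₁ c₂ : ℝ) {r : ℝ} (hr : 1 < r) :
    HasDerivAt (fun x => Wfn b μ x * (c₁ + c₂ * Vfn b μ x)) (Dfn b μ c₁ c₂ r) r := by
  have hr0 : (0:ℝ) < r := lt_trans one_pos hr
  have hW := hasDerivAt_Wfn b μ hr0
  have hV := ((hasDerivAt_Vfn b μ hr).const_mul c₂).const_add c₁
  have := hW.mul hV
  exact this.congr_deriv rfl

lemma ode_check (b μ c₁ c₂ : ℝ) {r : ℝ} (hr : 1 < r) :
    -(deriv (fun x => Dfn b μ c₁ c₂ x) r) - Dfn b μ c₁ c₂ r / r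
      + (μ / r - b * r / 2) ^ 2 * (Wfn b μ r * (c₁ + c₂ * Vfn b μ r))
      = b * (Wfn b μ r * (c₁ + c₂ * Vfn b μ r)) := by
  have hr0 : (0:ℝ) < r := lt_trans one_pos hr
  have hrne : r ≠ 0 := hr0.ne'
  have hW := hasDerivAt_Wfn b μ hr0
  have hf := hasDerivAt_ffn b μ hr0
  have ha := hasDerivAt_afn b μ hrne
  have hV := ((hasDerivAt_Vfn b μ hr).const_mul c₂).const_add c₁
  have hD : HasDerivAt (fun x => Dfn b μ c₁ c₂ x)
      (((-μ / r ^ 2 - b / 2) * Wfn b μ r + (μ / r - b * r / 2) * ((μ / r - b * r / 2) * Wfn b μ r))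
        * (c₁ + c₂ * Vfn b μ r)
       + (μ / r - b * r / 2) * Wfn b μ r * (c₂ * ffn b μ r)
       + ((μ / r - b * r / 2) * Wfn b μ r * (c₂ * ffn b μ r)
          + Wfn b μ r * (c₂ * (((-1 - 2 * μ) / r + b * r) * ffn b μ r)))) r := by
    have h1 := ((ha.mul hW).mul hV).add (hW.mul ((hf.const_mul c₂)))
    exact h1.congr_deriv rfl
  rw [hD.deriv]
  unfold Dfn
  field_simp
  ring

lemma hasDerivAt_Pfn (b μ : ℝ) (u : ℝ → ℝ) {r : ℝ} (hr : 1 < r)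
    (hu1 : DifferentiableAt ℝ u r) (hu2 : DifferentiableAt ℝ (deriv u) r)
    (hode : -(deriv (deriv u) r) - deriv u r / r + (μ / r - b * r / 2) ^ 2 * u r = b * u r) :
    HasDerivAt (fun x => x * (Wfn b μ x * deriv u x - (μ / x - b * x / 2) * Wfn b μ x * u x))
      0 r := by
  have hr0 : (0:ℝ) < r := lt_trans one_pos hr
  have hrne : r ≠ 0 := hr0.ne'
  have hW := hasDerivAt_Wfn b μ hr0
  have ha := hasDerivAt_afn b μ hrne
  have h1 := (hasDerivAt_id r).mul ((hW.mul hu2.hasDerivAt).sub ((ha.mul hW).mul hu1.hasDerivAt))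
  refine h1.congr_deriv ?_
  symm
  have hODE : deriv (deriv u) r = -(deriv u r / r) + ((μ / r - b * r / 2) ^ 2 - b) * u r := by
    linear_combination -hode
  rw [hODE]
  simp only [Pi.mul_apply, Pi.sub_apply, id]
  field_simp
  ring

/-- General solution of the fiber equation at energy `b`: a twice differentiable function
`u` on `(1,∞)` solves the fiber ODE at energy `b` iff
`u(r) = r^{m−ν}·e^{−br²/4}·(c₁ + c₂·∫₁^r ρ^{−1−2(m−ν)}·e^{bρ²/2} dρ)` for some `c₁, c₂`. -/
theorem fiber_general_solution
    (b : ℝ) (hb : 0 < b) (m : ℤ) (ν : ℝ) (u : ℝ → ℝ)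
    (hu1 : ∀ r > (1:ℝ), DifferentiableAt ℝ u r)
    (hu2 : ∀ r > (1:ℝ), DifferentiableAt ℝ (deriv u) r) :
    (∀ r > (1:ℝ), -(deriv (deriv u) r) - deriv u r / r
        + (((m : ℝ) - ν) / r - b * r / 2) ^ 2 * u r = b * u r) ↔
    (∃ c₁ c₂ : ℝ, ∀ r > (1:ℝ),
      u r = r ^ ((m : ℝ) - ν) * Real.exp (-b * r ^ 2 / 4) *
        (c₁ + c₂ * ∫ ρ in (1:ℝ)..r,
          ρ ^ (-1 - 2 * ((m : ℝ) - ν)) * Real.exp (b * ρ ^ 2 / 2))) := by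
  set μ := (m : ℝ) - ν with hμ
  have hform : ∀ c₁ c₂ r : ℝ,
      r ^ μ * Real.exp (-b * r ^ 2 / 4) *
        (c₁ + c₂ * ∫ ρ in (1:ℝ)..r, ρ ^ (-1 - 2 * μ) * Real.exp (b * ρ ^ 2 / 2))
      = Wfn b μ r * (c₁ + c₂ * Vfn b μ r) := by
    intro c₁ c₂ r
    simp only [Wfn, Vfn, ffn]
  constructor
  · intro h
    have hP : ∀ r, 1 < r → HasDerivAt
        (fun x => x * (Wfn b μ x * deriv u x - (μ / x - b * x / 2) * Wfn b μ x * u x)) 0 r :=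
      fun r hr => hasDerivAt_Pfn b μ u hr (hu1 r hr) (hu2 r hr) (h r hr)
    set C : ℝ := 2 * (Wfn b μ 2 * deriv u 2 - (μ / 2 - b * 2 / 2) * Wfn b μ 2 * u 2) with hC
    have hPconst : ∀ r, 1 < r →
        r * (Wfn b μ r * deriv u r - (μ / r - b * r / 2) * Wfn b μ r * u r) = C :=
      fun r hr => const_of_hasDerivAt_zero hP hr one_lt_two
    have hgd : ∀ r, 1 < r →
        HasDerivAt (fun x => u x / Wfn b μ x - C * Vfn b μ x) 0 r := by
      intro r hr
      have hr0 : (0:ℝ) < r := lt_trans one_pos hr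
      have hrne : r ≠ 0 := hr0.ne'
      have hWpos := Wfn_pos b μ hr0
      have hd := ((hu1 r hr).hasDerivAt.div (hasDerivAt_Wfn b μ hr0) hWpos.ne').sub
        ((hasDerivAt_Vfn b μ hr).const_mul C)
      refine hd.congr_deriv ?_
      symm
      have hkey : deriv u r * Wfn b μ r - u r * ((μ / r - b * r / 2) * Wfn b μ r) = C / r := by
        rw [← hPconst r hr]
        field_simp
      rw [hkey]
      have hfW := ffn_Wfn b μ hr0
      have hfr : ffn b μ r = 1 / (r * Wfn b μ r ^ 2) := by
        rw [eq_div_iff (by positivity), hfW]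
      rw [hfr]
      field_simp
      ring
  
    have hg : ∀ r, 1 < r →
        u r / Wfn b μ r - C * Vfn b μ r = u 2 / Wfn b μ 2 - C * Vfn b μ 2 :=
      fun r hr => const_of_hasDerivAt_zero hgd hr one_lt_two
    refine ⟨u 2 / Wfn b μ 2 - C * Vfn b μ 2, C, ?_⟩
    intro r hr
    have hr0 : (0:ℝ) < r := lt_trans one_pos hr
    have hWpos := Wfn_pos b μ hr0
    rw [hform]
    have := hg r hr
    field_simp at this ⊢
    linarith
  · rintro ⟨c₁, c₂, hc⟩ r hr
    have hUG : ∀ x ∈ Set.Ioi (1:ℝ), u x = Wfn b μ x * (c₁ + c₂ * Vfn b μ x) := by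
      intro x hx
      rw [hc x hx, hform]
    have hderiv_u : ∀ x, 1 < x → deriv u x = Dfn b μ c₁ c₂ x := by
      intro x hx
      have ev : u =ᶠ[nhds x] fun y => Wfn b μ y * (c₁ + c₂ * Vfn b μ y) :=
        Filter.eventuallyEq_of_mem (isOpen_Ioi.mem_nhds hx) hUG
      rw [ev.deriv_eq, (hasDerivAt_G b μ c₁ c₂ hx).deriv]
    have hderiv2 : deriv (deriv u) r = deriv (fun x => Dfn b μ c₁ c₂ x) r := by
      apply Filter.EventuallyEq.deriv_eq
      exact Filter.eventuallyEq_of_mem (isOpen_Ioi.mem_nhds hr)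
        (fun x hx => hderiv_u x hx)
    rw [hderiv2, hderiv_u r hr, hUG r hr]
    exact ode_check b μ c₁ c₂ hr
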